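/- Let γ = 1, i.e. lim_{n→∞} ℱ(n+1)/ℱ(n) = 1. Then, with m_n and p_n defined from any admissible extension G, for every fixed x ∈ ℤ one has P(X_{(n)} ≤ m_n + x) − p_n → 0 as n → ∞ (and in fact p_n → e^{−1}). -/

import Mathlib

open MeasureTheory ProbabilityTheory Filter



private lemma slope_symm (f : ℝ → ℝ) (u v : ℝ) :
    (f u - f v) / (u - v) = (f v - f u) / (v - u) := by
  rw [← neg_div_neg_eq]; ring_nf

private lemma slope_between {f : ℝ → ℝ} (hf : ConvexOn ℝ (Set.Ici 0) f)
    {p q a b r s : ℝ} (hp : 0 ≤ p) (hpq : p < q) (hqa : q ≤ a) (hab : a < b)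
    (hbr : b ≤ r) (hrs : r < s) :
    (f q - f p) / (q - p) ≤ (f b - f a) / (b - a) ∧
      (f b - f a) / (b - a) ≤ (f s - f r) / (s - r) := by
  have hq : (0:ℝ) ≤ q := hp.trans hpq.le
  have ha : (0:ℝ) ≤ a := hq.trans hqa
  have hb : (0:ℝ) ≤ b := ha.trans hab.le
  have hr : (0:ℝ) ≤ r := hb.trans hbr
  have hs0 : (0:ℝ) ≤ s := hr.trans hrs.le
  have hpa : p < a := hpq.trans_le hqa
  have hpb : p < b := hpa.trans hab
  have has : a < s := hab.trans_le (hbr.trans hrs.le)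
  have hbs : b < s := (hbr.trans_lt hrs)
  constructor
  · have h1 : (f q - f p) / (q - p) ≤ (f b - f p) / (b - p) :=
      hf.secant_mono hp hq hb hpq.ne' hpb.ne' (hqa.trans hab.le)
    have h2 : (f p - f b) / (p - b) ≤ (f a - f b) / (a - b) :=
      hf.secant_mono hb hp ha hpb.ne hab.ne hpa.le
    rw [slope_symm f p b, slope_symm f a b] at h2
    exact h1.trans h2
  · have h3 : (f b - f a) / (b - a) ≤ (f s - f a) / (s - a) :=
      hf.secant_mono ha hb hs0 hab.ne' has.ne' hbs.le
    have h4 : (f a - f s) / (a - s) ≤ (f r - f s) / (r - s) :=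
      hf.secant_mono hs0 ha hr has.ne hrs.ne (hab.le.trans hbr)
    rw [slope_symm f a s, slope_symm f r s] at h4
    have h4' : (f s - f a) / (s - a) ≤ (f s - f r) / (s - r) := h4
    exact h3.trans h4'

private lemma tendsto_diff_of_convex {f : ℝ → ℝ} (hf : ConvexOn ℝ (Set.Ici 0) f)
    (hs : Tendsto (fun t : ℕ => f ((t : ℝ) + 1) - f t) atTop (nhds 0))
    (a b : ℕ → ℝ) {C : ℝ} (hC : 0 ≤ C)
    (hab : ∀ᶠ n in atTop, a n ≤ b n ∧ b n ≤ a n + C)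
    (ha : Tendsto a atTop atTop) :
    Tendsto (fun n => f (b n) - f (a n)) atTop (nhds 0) := by
  set M : ℕ := ⌈C⌉₊ + 1 with hMdef
  have hM : C + 1 ≤ (M : ℝ) := by
    have := Nat.le_ceil C
    push_cast [hMdef]; linarith
  set N : ℕ → ℕ := fun n => ⌊a n⌋₊ with hNdef
  have hN : Tendsto N atTop atTop := tendsto_nat_floor_atTop.comp ha
  set L : ℕ → ℝ := fun n => f ((((N n - 1 : ℕ)) : ℝ) + 1) - f ((N n - 1 : ℕ)) with hLdef
  set U : ℕ → ℝ := fun n => f ((((N n + M : ℕ)) : ℝ) + 1) - f ((N n + M : ℕ)) with hUdef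
  have hL : Tendsto L atTop (nhds 0) := hs.comp ((tendsto_sub_atTop_nat 1).comp hN)
  have hU : Tendsto U atTop (nhds 0) := hs.comp ((tendsto_add_atTop_nat M).comp hN)
  have hlow : Tendsto (fun n => -(C * |L n|)) atTop (nhds 0) := by
    have := (hL.abs.const_mul C).neg
    simpa using this
  have hhigh : Tendsto (fun n => C * |U n|) atTop (nhds 0) := by
    have := hU.abs.const_mul C
    simpa using this
  apply tendsto_of_tendsto_of_tendsto_of_le_of_le' hlow hhigh
  all_goals
    filter_upwards [hab, ha.eventually_ge_atTop 1, hN.eventually_ge_atTop 1] with n hn h1 hN1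
  case _ =>
    -- lower bound
    rcases eq_or_lt_of_le hn.1 with heq | hlt
    · rw [← heq]; simp; positivity
    · have h0a : (0:ℝ) ≤ a n := le_trans zero_le_one h1
      have hfloor_le : ((N n : ℕ) : ℝ) ≤ a n := Nat.floor_le h0a
      have hlt_floor : a n < (N n : ℕ) + 1 := Nat.lt_floor_add_one _
      have hcast : ((N n - 1 : ℕ) : ℝ) = (N n : ℝ) - 1 := by
        rw [Nat.cast_sub hN1]; norm_num
      have hcast2 : ((N n + M : ℕ) : ℝ) = (N n : ℝ) + M := by push_cast; ring
      have hsb := slope_between hf (p := ((N n - 1 : ℕ) : ℝ)) (q := (N n : ℝ))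
        (a := a n) (b := b n) (r := ((N n + M : ℕ) : ℝ)) (s := ((N n + M : ℕ) : ℝ) + 1)
        (by positivity) (by rw [hcast]; linarith) hfloor_le hlt
        (by rw [hcast2]; linarith [hn.2, hM]) (by linarith)
      have hq1 : (N n : ℝ) - ((N n - 1 : ℕ) : ℝ) = 1 := by rw [hcast]; ring
      have hr1 : (((N n + M : ℕ) : ℝ) + 1) - ((N n + M : ℕ) : ℝ) = 1 := by ring
      have hS1 : L n ≤ (f (b n) - f (a n)) / (b n - a n) := by
        have := hsb.1
        rw [hq1, div_one] at this
        have hLeq : L n = f ((N n : ℝ)) - f ((N n - 1 : ℕ)) := by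
          rw [hLdef]; simp only []; rw [hcast]; ring_nf
        rw [hLeq]; exact this
      have hmul : L n * (b n - a n) ≤ f (b n) - f (a n) :=
        (le_div_iff₀ (sub_pos.mpr hlt)).mp hS1
      nlinarith [neg_abs_le (L n), abs_nonneg (L n), hn.2, sub_nonneg.mpr hn.1]
  case _ =>
    rcases eq_or_lt_of_le hn.1 with heq | hlt
    · rw [← heq]; simp; positivity
    · have h0a : (0:ℝ) ≤ a n := le_trans zero_le_one h1
      have hfloor_le : ((N n : ℕ) : ℝ) ≤ a n := Nat.floor_le h0a
      have hlt_floor : a n < (N n : ℕ) + 1 := Nat.lt_floor_add_one _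
      have hcast : ((N n - 1 : ℕ) : ℝ) = (N n : ℝ) - 1 := by
        rw [Nat.cast_sub hN1]; norm_num
      have hcast2 : ((N n + M : ℕ) : ℝ) = (N n : ℝ) + M := by push_cast; ring
      have hsb := slope_between hf (p := ((N n - 1 : ℕ) : ℝ)) (q := (N n : ℝ))
        (a := a n) (b := b n) (r := ((N n + M : ℕ) : ℝ)) (s := ((N n + M : ℕ) : ℝ) + 1)
        (by positivity) (by rw [hcast]; linarith) hfloor_le hlt
        (by rw [hcast2]; linarith [hn.2, hM]) (by linarith)
      have hr1 : (((N n + M : ℕ) : ℝ) + 1) - ((N n + M : ℕ) : ℝ) = 1 := by ring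
      have hS2 : (f (b n) - f (a n)) / (b n - a n) ≤ U n := by
        have := hsb.2
        rw [hr1, div_one] at this
        exact this
      have hmul : f (b n) - f (a n) ≤ U n * (b n - a n) :=
        (div_le_iff₀ (sub_pos.mpr hlt)).mp hS2
      nlinarith [le_abs_self (U n), abs_nonneg (U n), hn.2, sub_nonneg.mpr hn.1]

private lemma tendsto_pow_exp_neg_one {F : ℕ → ℝ} (hpos : ∀ᶠ n in atTop, 0 < F n)
    (h : Tendsto (fun n : ℕ => (n : ℝ) * F n) atTop (nhds 1)) :
    Tendsto (fun n => (1 - F n) ^ n) atTop (nhds (Real.exp (-1))) := by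
  have hF0 : Tendsto F atTop (nhds 0) := by
    have h2 : Tendsto (fun n : ℕ => ((n : ℝ) * F n) * (1 / n)) atTop (nhds (1 * 0)) :=
      h.mul tendsto_one_div_atTop_nhds_zero_nat
    rw [mul_zero] at h2
    apply h2.congr'
    filter_upwards [eventually_ge_atTop 1] with n hn
    have : (n : ℝ) ≠ 0 := by positivity
    field_simp
  have hlt1 : ∀ᶠ n in atTop, F n < 1 := hF0.eventually_lt_const zero_lt_one
  -- slope of log at 1
  have hderiv : HasDerivAt Real.log 1 1 := by
    have := Real.hasDerivAt_log (one_ne_zero)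
    simpa using this
  have hslope : Tendsto (slope Real.log 1) (nhdsWithin 1 {(1:ℝ)}ᶜ) (nhds 1) :=
    hasDerivAt_iff_tendsto_slope.mp hderiv
  have hu : Tendsto (fun n => 1 - F n) atTop (nhdsWithin 1 {(1:ℝ)}ᶜ) := by
    rw [tendsto_nhdsWithin_iff]
    constructor
    · simpa using (tendsto_const_nhds.sub hF0)
    · filter_upwards [hpos] with n hn
      simp only [Set.mem_compl_iff, Set.mem_singleton_iff]
      intro hcon
      have : F n = 0 := by linarith [hcon]
      exact absurd this (ne_of_gt hn)
  have hcomp : Tendsto (fun n => slope Real.log 1 (1 - F n)) atTop (nhds 1) :=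
    hslope.comp hu
  have hlog : Tendsto (fun n : ℕ => (n : ℝ) * Real.log (1 - F n)) atTop (nhds (-1)) := by
    have hmul : Tendsto (fun n : ℕ => ((n : ℝ) * F n) * (slope Real.log 1 (1 - F n)) * (-1))
        atTop (nhds (1 * 1 * (-1))) := (h.mul hcomp).mul_const (-1)
    rw [show (1:ℝ) * 1 * (-1) = -1 by norm_num] at hmul
    apply hmul.congr'
    filter_upwards [hpos] with n hn
    have hne : F n ≠ 0 := ne_of_gt hn
    rw [slope_def_field, Real.log_one]
    field_simp
    ring_nf
    field_simp
  have hexp : Tendsto (fun n : ℕ => Real.exp ((n : ℝ) * Real.log (1 - F n))) atTop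
      (nhds (Real.exp (-1))) := (Real.continuous_exp.tendsto _).comp hlog
  apply hexp.congr'
  filter_upwards [hpos, hlt1] with n hn hn1
  have hv : 0 < 1 - F n := by linarith
  rw [Real.exp_nat_mul, Real.exp_log hv]

/-- An admissible extension of the tail `ℱ : ℕ → ℝ` of a discrete distribution:
a positive, continuous, strictly decreasing, log-convex function on `[0,∞)`
tending to `0` at `+∞` and agreeing with `ℱ` on the integers. -/
structure AdmissibleExt (Ftail : ℕ → ℝ) : Type where
  G : ℝ → ℝ
  pos : ∀ x ∈ Set.Ici (0 : ℝ), 0 < G x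
  cont : ContinuousOn G (Set.Ici 0)
  anti : StrictAntiOn G (Set.Ici 0)
  logConvex : ConvexOn ℝ (Set.Ici 0) fun x => Real.log (G x)
  tendsto_zero : Tendsto G atTop (nhds 0)
  agrees : ∀ n : ℕ, G n = Ftail n

/-- **Theorem (γ = 1 case).** For i.i.d. `ℕ`-valued random variables whose tail ratio
`ℱ(n+1)/ℱ(n)` tends to `1`, with `mₙ`, `pₙ` defined from any admissible extension `G`,
for every fixed `x ∈ ℤ` one has `P(X₍ₙ₎ ≤ mₙ + x) − pₙ → 0`; moreover `pₙ → e⁻¹`. -/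
theorem max_iid_limit_of_ratio_tendsto_one
    {Ω : Type} [MeasurableSpace Ω] (μ : Measure Ω) [IsProbabilityMeasure μ]
    (X : ℕ → Ω → ℕ) (hmeas : ∀ i, Measurable (X i))
    (hindep : iIndepFun X μ)
    (hident : ∀ i, μ.map (X i) = μ.map (X 0))
    (Ftail : ℕ → ℝ) (hFtail : ∀ t : ℕ, Ftail t = (μ {ω | t < X 0 ω}).toReal)
    (hsupp : ∀ t : ℕ, 0 < Ftail t)
    (hγ : Tendsto (fun t : ℕ => Ftail (t + 1) / Ftail t) atTop (nhds 1))
    (E : AdmissibleExt Ftail)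
    (x : ℕ → ℝ) (hx0 : ∀ n, 2 ≤ n → 0 ≤ x n)
    (hx : ∀ n, 2 ≤ n → E.G (x n) = 1 / n)
    (m : ℕ → ℤ) (hm : ∀ n, m n = ⌊x n + 1 / 2⌋)
    (θ : ℕ → ℝ) (hθ : ∀ n, θ n = E.G (m n) / E.G (x n))
    (p : ℕ → ℝ) (hp : ∀ n, p n = Real.exp (-θ n)) :
    (∀ z : ℤ,
      Tendsto (fun n =>
          (μ {ω | (((Finset.range n).sup fun i => X i ω : ℕ) : ℤ) ≤ m n + z}).toReal - p n)
        atTop (nhds 0)) ∧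
    Tendsto p atTop (nhds (Real.exp (-1))) := by
  -- x tends to infinity
  have hxtop : Tendsto x atTop atTop := by
    rw [tendsto_atTop]
    intro B
    set B' := max B 0 with hB'
    have hB'0 : (0:ℝ) ≤ B' := le_max_right _ _
    have hGB : 0 < E.G B' := E.pos B' hB'0
    filter_upwards [tendsto_one_div_atTop_nhds_zero_nat.eventually_lt_const hGB,
      eventually_ge_atTop 2] with n hlt hn2
    by_contra hcon
    push_neg at hcon
    have hxB : x n ≤ B' := le_trans hcon.le (le_max_left _ _)
    have hle : E.G B' ≤ E.G (x n) := E.anti.antitoneOn (hx0 n hn2) hB'0 hxB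
    rw [hx n hn2] at hle
    exact absurd (lt_of_le_of_lt hle hlt) (lt_irrefl _)
  -- the log-slope sequence tends to 0
  have hs : Tendsto (fun t : ℕ => Real.log (E.G ((t : ℝ) + 1)) - Real.log (E.G t))
      atTop (nhds 0) := by
    have hlog : Tendsto (fun t : ℕ => Real.log (Ftail (t + 1) / Ftail t)) atTop (nhds 0) := by
      have := (Real.continuousAt_log one_ne_zero).tendsto.comp hγ
      simpa [Function.comp_def] using this
    apply hlog.congr
    intro t
    rw [Real.log_div (hsupp (t+1)).ne' (hsupp t).ne']
    have h1 : E.G ((t : ℝ) + 1) = Ftail (t + 1) := by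
      have := E.agrees (t + 1); push_cast at this ⊢; rw [← this]
    have h2 : E.G (t : ℝ) = Ftail t := E.agrees t
    rw [h1, h2]
  -- the key ratio lemma
  have hratio : ∀ z : ℤ,
      Tendsto (fun n => E.G (((m n + z : ℤ) : ℝ)) / E.G (x n)) atTop (nhds 1) := by
    intro z
    set f : ℝ → ℝ := fun y => Real.log (E.G y) with hf
    set y : ℕ → ℝ := fun n => ((m n + z : ℤ) : ℝ) with hy
    have hybound : ∀ n, |y n - x n| ≤ |(z : ℝ)| + 1 := by
      intro n
      have h1 : ((m n : ℤ) : ℝ) ≤ x n + 1 / 2 := by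
        rw [hm n]; exact Int.floor_le _
      have h2 : x n + 1 / 2 < ((m n : ℤ) : ℝ) + 1 := by
        rw [hm n]; exact Int.lt_floor_add_one _
      have hyval : y n = ((m n : ℤ) : ℝ) + (z : ℝ) := by rw [hy]; push_cast; ring
      rw [abs_le]
      constructor
      · nlinarith [neg_abs_le ((z:ℝ))]
      · nlinarith [le_abs_self ((z:ℝ))]
    set C : ℝ := |(z : ℝ)| + 1 with hC
    have hC0 : 0 ≤ C := by positivity
    have hymin : ∀ n, x n - C ≤ min (x n) (y n) := by
      intro n
      have := hybound n
      rw [abs_le] at this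
      rcases le_total (x n) (y n) with h | h
      · rw [min_eq_left h]; linarith
      · rw [min_eq_right h]; linarith
    have hamin : Tendsto (fun n => min (x n) (y n)) atTop atTop := by
      apply tendsto_atTop_mono hymin
      exact tendsto_atTop_add_const_right atTop (-C) hxtop |>.congr (fun n => by ring)
    have hdiff : Tendsto (fun n => f (max (x n) (y n)) - f (min (x n) (y n)))
        atTop (nhds 0) := by
      apply tendsto_diff_of_convex E.logConvex hs _ _ hC0 _ hamin
      apply Eventually.of_forall
      intro n
      refine ⟨min_le_max, ?_⟩
      have := hybound n
      rw [abs_le] at this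
      rcases le_total (x n) (y n) with h | h
      · rw [min_eq_left h, max_eq_right h]; linarith
      · rw [min_eq_right h, max_eq_left h]; linarith
    have hdiffxy : Tendsto (fun n => f (y n) - f (x n)) atTop (nhds 0) := by
      apply squeeze_zero_norm' (a := fun n => |f (max (x n) (y n)) - f (min (x n) (y n))|)
      · apply Eventually.of_forall
        intro n
        rcases le_total (x n) (y n) with h | h
        · rw [max_eq_right h, min_eq_left h, Real.norm_eq_abs]
        · rw [max_eq_left h, min_eq_right h, Real.norm_eq_abs, abs_sub_comm]
      · simpa using hdiff.abs
    have hy0 : ∀ᶠ n in atTop, 0 ≤ y n := by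
      filter_upwards [hxtop.eventually_ge_atTop C] with n hn
      have := hymin n
      have : x n - C ≤ y n := le_trans this (min_le_right _ _)
      linarith
    have hx0' : ∀ᶠ n in atTop, 0 ≤ x n := hxtop.eventually_ge_atTop 0
    have := (Real.continuous_exp.tendsto 0).comp hdiffxy
    rw [Real.exp_zero] at this
    apply this.congr'
    filter_upwards [hy0, hx0'] with n hn1 hn2
    have hGy : 0 < E.G (y n) := E.pos _ hn1
    have hGx : 0 < E.G (x n) := E.pos _ hn2
    simp only [Function.comp_apply, hf]
    rw [Real.exp_sub, Real.exp_log hGy, Real.exp_log hGx]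
  -- θ → 1 and p → exp(-1)
  have hθ1 : Tendsto θ atTop (nhds 1) := by
    have := hratio 0
    simp only [add_zero] at this
    apply this.congr
    intro n
    rw [hθ n]
  have hp1 : Tendsto p atTop (nhds (Real.exp (-1))) := by
    have := (Real.continuous_exp.tendsto _).comp hθ1.neg
    apply this.congr
    intro n
    rw [hp n]; rfl
  refine ⟨?_, hp1⟩
  intro z
  set K : ℕ → ℕ := fun n => (m n + z).toNat with hK
  have hmz : ∀ᶠ n in atTop, 0 ≤ m n + z := by
    filter_upwards [hxtop.eventually_ge_atTop (|(z : ℝ)| + 1)] with n hn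
    have h2 : x n + 1 / 2 < ((m n : ℤ) : ℝ) + 1 := by
      rw [hm n]; exact Int.lt_floor_add_one _
    have : (0 : ℝ) ≤ ((m n + z : ℤ) : ℝ) := by
      push_cast
      nlinarith [neg_abs_le ((z:ℝ))]
    exact_mod_cast this
  have hKcast : ∀ᶠ n in atTop, ((K n : ℕ) : ℝ) = ((m n + z : ℤ) : ℝ) := by
    filter_upwards [hmz] with n hn
    rw [hK]
    rw [show (((m n + z).toNat : ℕ) : ℝ) = (((m n + z).toNat : ℤ) : ℝ) by push_cast; ring,
      Int.toNat_of_nonneg hn]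
  -- n * Ftail (K n) → 1
  have hnF : Tendsto (fun n : ℕ => (n : ℝ) * Ftail (K n)) atTop (nhds 1) := by
    apply (hratio z).congr'
    filter_upwards [hKcast, eventually_ge_atTop 2] with n hn hn2
    have hGK : E.G (((m n + z : ℤ) : ℝ)) = Ftail (K n) := by
      rw [← hn, E.agrees]
    rw [hGK, hx n hn2]
    have hnne : (n : ℝ) ≠ 0 := by positivity
    field_simp
  have hpow : Tendsto (fun n => (1 - Ftail (K n)) ^ n) atTop (nhds (Real.exp (-1))) :=
    tendsto_pow_exp_neg_one (Eventually.of_forall fun n => hsupp (K n)) hnF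
  -- the probability identity
  have hprob : ∀ᶠ n in atTop,
      (μ {ω | (((Finset.range n).sup fun i => X i ω : ℕ) : ℤ) ≤ m n + z}).toReal
        = (1 - Ftail (K n)) ^ n := by
    filter_upwards [hmz] with n hn
    have hset : {ω | (((Finset.range n).sup fun i => X i ω : ℕ) : ℤ) ≤ m n + z}
        = ⋂ i ∈ Finset.range n, X i ⁻¹' Set.Iic (K n) := by
      ext ω
      simp only [Set.mem_setOf_eq, Set.mem_iInter, Set.mem_preimage, Set.mem_Iic]
      rw [show m n + z = ((K n : ℕ) : ℤ) by rw [hK, Int.toNat_of_nonneg hn]]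
      rw [Int.ofNat_le]
      exact Finset.sup_le_iff
    rw [hset]
    rw [hindep.meas_biInter (fun i _ => ⟨Set.Iic (K n), measurableSet_Iic, rfl⟩)]
    have hterm : ∀ i, μ (X i ⁻¹' Set.Iic (K n)) = μ (X 0 ⁻¹' Set.Iic (K n)) := by
      intro i
      rw [← Measure.map_apply (hmeas i) measurableSet_Iic, hident i,
        Measure.map_apply (hmeas 0) measurableSet_Iic]
    rw [Finset.prod_congr rfl (fun i _ => hterm i), Finset.prod_const, Finset.card_range]
    rw [ENNReal.toReal_pow]
    congr 1
    -- q.toReal = 1 - Ftail (K n)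
    have hcompl : (X 0 ⁻¹' Set.Iic (K n))ᶜ = {ω | K n < X 0 ω} := by
      ext ω; simp [not_le]
    have hmc : μ ((X 0 ⁻¹' Set.Iic (K n))ᶜ)
        = 1 - μ (X 0 ⁻¹' Set.Iic (K n)) := by
      rw [measure_compl ((hmeas 0) measurableSet_Iic) (measure_ne_top μ _)]
      simp
    have hFval : Ftail (K n) = (1 - μ (X 0 ⁻¹' Set.Iic (K n))).toReal := by
      rw [hFtail (K n), ← hmc, hcompl]
    rw [hFval, ENNReal.toReal_sub_of_le prob_le_one ENNReal.one_ne_top]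
    simp
  have hfinal := hpow.sub hp1
  rw [sub_self] at hfinal
  apply hfinal.congr'
  filter_upwards [hprob] with n hn
  rw [hn]
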